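/- Let p be a prime, let A be a finitely generated abelian group that can be generated by m elements, and suppose that the quotient A/pA, viewed as a vector space over the field with p elements, has dimension m. If A contains a nonzero element of finite order, then A contains an element of order exactly p. -/

import Mathlib

private lemma aux_no_order_p (p : ℕ) (hp : p.Prime) {A : Type*} [AddCommGroup A]
    (m : ℕ) (S : Finset A) (hScard : S.card = m)
    (hSgen : AddSubgroup.closure (S : Set A) = ⊤)
    (pA : AddSubgroup A) (hmem : ∀ a : A, p • a ∈ pA)
    [Module (ZMod p) (A ⧸ pA)]
    (hdim : Module.finrank (ZMod p) (A ⧸ pA) = m)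
    (htor : ∃ x : A, x ≠ 0 ∧ IsOfFinAddOrder x)
    (hcon : ∀ y : A, addOrderOf y ≠ p) : False := by
  haveI : Fact p.Prime := ⟨hp⟩
  -- p-multiplication is injective
  have hinj : ∀ a : A, p • a = 0 → a = 0 := by
    intro a ha
    have hd : addOrderOf a ∣ p := addOrderOf_dvd_iff_nsmul_eq_zero.mpr ha
    rcases (hp.eq_one_or_self_of_dvd _ hd) with h1 | h1
    · exact AddMonoid.addOrderOf_eq_one_iff.mp h1
    · exact absurd h1 (hcon a)
  set π : A →+ A ⧸ pA := QuotientAddGroup.mk' pA with hπ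
  -- every element is a ℤ-combination of S
  have hspan : ∀ a : A, ∃ f : A → ℤ, ∑ i ∈ S, f i • i = a := by
    intro a
    have h1 : AddSubgroup.closure (S : Set A) ≤ (Submodule.span ℤ (S : Set A)).toAddSubgroup :=
      (AddSubgroup.closure_le _).mpr Submodule.subset_span
    have h2 : a ∈ Submodule.span ℤ (S : Set A) := h1 (hSgen ▸ AddSubgroup.mem_top a)
    obtain ⟨f, -, hf⟩ := Submodule.mem_span_finset.mp h2
    exact ⟨f, hf⟩
  set σ : ({x // x ∈ S} → ℤ) → A := fun v => ∑ i : {x // x ∈ S}, v i • (i : A) with hσdef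
  have hL1 : ∀ a : A, ∃ v, σ v = a := by
    intro a
    obtain ⟨f, hf⟩ := hspan a
    refine ⟨fun i => f i, ?_⟩
    rw [hσdef]
    rw [← hf, ← Finset.sum_attach S (fun x => f x • x)]
    rfl
  -- the linear map over ZMod p
  set g : ({x // x ∈ S} → ZMod p) →ₗ[ZMod p] (A ⧸ pA) :=
    Fintype.linearCombination (ZMod p) (fun i : {x // x ∈ S} => π (i : A)) with hg
  have hcompute : ∀ v : {x // x ∈ S} → ℤ,
      g (fun i => ((v i : ℤ) : ZMod p)) = π (σ v) := by
    intro v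
    rw [hg, Fintype.linearCombination_apply, hσdef, map_sum]
    refine Finset.sum_congr rfl fun i _ => ?_
    rw [Int.cast_smul_eq_zsmul, map_zsmul]
  have hgsurj : Function.Surjective g := by
    intro z
    obtain ⟨a, ha⟩ := QuotientAddGroup.mk'_surjective pA z
    obtain ⟨v, hv⟩ := hL1 a
    exact ⟨fun i => ((v i : ℤ) : ZMod p), by rw [hcompute, hv]; exact ha⟩
  have hginj : Function.Injective g := by
    have hrange : LinearMap.range g = ⊤ := LinearMap.range_eq_top.mpr hgsurj
    have hfd : Module.finrank (ZMod p) ({x // x ∈ S} → ZMod p) = m := by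
      rw [Module.finrank_pi, Fintype.card_coe, hScard]
    have hrk := LinearMap.finrank_range_add_finrank_ker g
    rw [hrange, finrank_top, hdim, hfd] at hrk
    have hker0 : Module.finrank (ZMod p) (LinearMap.ker g) = 0 := by omega
    rw [← LinearMap.ker_eq_bot]
    exact Submodule.finrank_eq_zero.mp hker0
  -- key divisibility lemma
  have hL2 : ∀ v : {x // x ∈ S} → ℤ, σ v ∈ pA → ∀ i, (p : ℤ) ∣ v i := by
    intro v hv i
    have h0 : π (σ v) = 0 := (QuotientAddGroup.eq_zero_iff _).mpr hv
    have h1 : g (fun i => ((v i : ℤ) : ZMod p)) = g 0 := by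
      rw [hcompute, h0, map_zero]
    have h2 := congrFun (hginj h1) i
    simpa using (ZMod.intCast_zmod_eq_zero_iff_dvd (v i) p).mp h2
  -- torsion element of prime order q
  obtain ⟨x, hx0, hxfin⟩ := htor
  set n := addOrderOf x with hn
  have hn0 : 0 < n := hxfin.addOrderOf_pos
  have hn1 : n ≠ 1 := by
    intro h; exact hx0 (AddMonoid.addOrderOf_eq_one_iff.mp h)
  set q := n.minFac with hq
  have hqprime : q.Prime := Nat.minFac_prime hn1
  set y := (n / q) • x with hy
  have hqy : q • y = 0 := by
    rw [hy, ← mul_nsmul, Nat.div_mul_cancel n.minFac_dvd, hn]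
    exact addOrderOf_nsmul_eq_zero x
  have hy0 : y ≠ 0 := by
    intro h
    have hd : n ∣ n / q := addOrderOf_dvd_iff_nsmul_eq_zero.mpr (hy ▸ h)
    have hpos : 0 < n / q := Nat.div_pos (Nat.minFac_le hn0) hqprime.pos
    have h2 := Nat.le_of_dvd hpos hd
    have h3 := Nat.div_lt_self hn0 hqprime.one_lt
    omega
  have hyq : addOrderOf y = q := by
    have hd : addOrderOf y ∣ q := addOrderOf_dvd_iff_nsmul_eq_zero.mpr hqy
    rcases hqprime.eq_one_or_self_of_dvd _ hd with h1 | h1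
    · exact absurd (AddMonoid.addOrderOf_eq_one_iff.mp h1) hy0
    · exact h1
  have hqp : q ≠ p := fun h => hcon y (hyq.trans h)
  -- coprimality : q-torsion elements lie in pA
  have hcop : IsCoprime (p : ℤ) (q : ℤ) :=
    Nat.isCoprime_iff_coprime.mpr ((Nat.coprime_primes hp hqprime).mpr (Ne.symm hqp))
  have hkey : ∀ a : A, q • a = 0 → a ∈ pA := by
    intro a ha
    obtain ⟨u, w, huw⟩ := hcop
    have h1 : a = (u * (p : ℤ)) • a + (w * (q : ℤ)) • a := by
      rw [← add_smul, huw, one_smul]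
    have h2 : (w * (q : ℤ)) • a = 0 := by
      rw [mul_smul, natCast_zsmul, ha, smul_zero]
    have h3 : a = p • (u • a) := by
      rw [h2, add_zero] at h1
      calc a = (u * (p : ℤ)) • a := h1
        _ = u • ((p : ℤ) • a) := mul_smul _ _ _
        _ = u • (p • a) := by rw [natCast_zsmul]
        _ = p • (u • a) := smul_comm _ _ _
    rw [h3]; exact hmem _
  -- descent
  have hdesc : ∀ k : ℕ, ∀ v : {x // x ∈ S} → ℤ, q • σ v = 0 → ∀ i, (p : ℤ) ^ k ∣ v i := by
    intro k
    induction k with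
    | zero => intro v _ i; simp
    | succ k ih =>
      intro v hv i
      have h1 : ∀ j, (p : ℤ) ∣ v j := hL2 v (hkey _ hv)
      choose w hw using h1
      have hσw : σ v = (p : ℤ) • σ w := by
        rw [hσdef, Finset.smul_sum]
        exact Finset.sum_congr rfl fun j _ => by rw [hw j, mul_smul]
      have hqw : q • σ w = 0 := by
        apply hinj
        have h2 : (p : ℤ) • (q • σ w) = 0 := by
          rw [smul_comm, ← hσw, hv]
        rwa [natCast_zsmul] at h2
      have h3 := ih w hqw i
      rw [hw i, pow_succ']
      exact mul_dvd_mul_left _ h3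
  obtain ⟨v, hv⟩ := hL1 y
  have hvz : ∀ i, v i = 0 := by
    intro i
    by_contra h0
    have hk := hdesc (v i).natAbs v (hv ▸ hqy) i
    have hle : (p : ℤ) ^ (v i).natAbs ≤ |v i| :=
      Int.le_of_dvd (abs_pos.mpr h0) ((dvd_abs _ _).mpr hk)
    have hlt : (v i).natAbs < p ^ (v i).natAbs :=
      lt_of_lt_of_le Nat.lt_two_pow_self (Nat.pow_le_pow_left hp.two_le _)
    have hlt2 : |v i| < (p : ℤ) ^ (v i).natAbs := by
      rw [Int.abs_eq_natAbs]
      exact_mod_cast hlt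
    omega
  have hy' : y = 0 := by
    rw [← hv, hσdef]
    simp [hvz]
  exact hy0 hy'

/-- Let p be prime and let A be a finitely generated abelian group generated by m elements
such that A/pA has dimension m as a vector space over the field with p elements. If A has a
nonzero element of finite order, then A has an element of order exactly p. -/
theorem exists_elem_of_order_p (p : ℕ) (hp : p.Prime) {A : Type*} [AddCommGroup A]
    (m : ℕ) (S : Finset A) (hScard : S.card = m)
    (hSgen : AddSubgroup.closure (S : Set A) = ⊤)
    (pA : AddSubgroup A) (hpA : pA = AddSubgroup.closure {x : A | ∃ a : A, x = p • a})
    (hdim :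
      letI : Module (ZMod p) (A ⧸ pA) := QuotientAddGroup.zmodModule
        (by intro x; rw [hpA]; exact AddSubgroup.subset_closure ⟨x, rfl⟩)
      Module.finrank (ZMod p) (A ⧸ pA) = m)
    (htor : ∃ x : A, x ≠ 0 ∧ IsOfFinAddOrder x) :
    ∃ y : A, addOrderOf y = p := by
  by_contra hcon
  push_neg at hcon
  have hmem : ∀ a : A, p • a ∈ pA := fun a => by
    rw [hpA]; exact AddSubgroup.subset_closure ⟨a, rfl⟩
  letI : Module (ZMod p) (A ⧸ pA) := QuotientAddGroup.zmodModule hmem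
  exact aux_no_order_p p hp m S hScard hSgen pA hmem hdim htor hcon
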